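/- arXiv:2602.23271 — 2 statements merged into one kernel-verified Lean document; each statement's English description precedes it below -/
import Mathlib

section
/- Let X be a random vector on a probability space taking values almost surely in the set {e₁, …, e_K} of standard basis vectors of ℝ^K (a one-hot encoded categorical random variable), and let X₁, X₂ be independent and identically distributed copies of X. Then the total variance of X equals the probability that two independent runs disagree: TV(X) = Tr(Σ) = P(X₁ ≠ X₂). -/
open MeasureTheory ProbabilityTheory

/-- If a random vector `X` takes values almost surely in the set of
standard basis vectors of `ℝ^K` (one-hot encoding) and `X₁, X₂` are i.i.d. copies of `X`,
then `TV(X) = Tr(Σ) = P(X₁ ≠ X₂)`. -/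
theorem stmt_3 {Ω : Type*} [MeasurableSpace Ω] {μ : Measure Ω} [IsProbabilityMeasure μ]
    {K : ℕ} (X X₁ X₂ : Ω → EuclideanSpace ℝ (Fin K))
    (hXm : Measurable X) (hX₁m : Measurable X₁) (hX₂m : Measurable X₂)
    (honehot : ∀ᵐ ω ∂μ, ∃ k : Fin K, X ω = EuclideanSpace.single k 1)
    (hindep : IndepFun X₁ X₂ μ)
    (hid1 : IdentDistrib X₁ X μ μ) (hid2 : IdentDistrib X₂ X μ μ) :
    ∑ k : Fin K, ∫ ω, (X ω k - ∫ ω', X ω' k ∂μ) ^ 2 ∂μ =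
      (μ {ω | X₁ ω ≠ X₂ ω}).toReal := by
  classical
  set e : Fin K → EuclideanSpace ℝ (Fin K) := fun k => EuclideanSpace.single k 1 with he
  have hinj : Function.Injective e := by
    intro j k h
    by_contra hjk
    have h2 := congrArg (fun v => v j) h
    simp [he, EuclideanSpace.single_apply, hjk] at h2
  set A : Fin K → Set Ω := fun k => X ⁻¹' {e k} with hA
  have hAm : ∀ k, MeasurableSet (A k) := fun k => hXm (measurableSet_singleton _)
  have hdisj : Pairwise (Function.onFun Disjoint A) := by
    intro j k hjk
    refine Set.disjoint_left.2 fun ω hj hk => ?_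
    exact hjk (hinj (Set.mem_singleton_iff.1 hj ▸ Set.mem_singleton_iff.1 hk ▸ rfl))
  set q : Fin K → ENNReal := fun k => μ (A k) with hq
  set p : Fin K → ℝ := fun k => (q k).toReal with hp
  have hqne : ∀ k, q k ≠ ⊤ := fun k => (measure_lt_top μ _).ne
  have hS : MeasurableSet (Set.range e) := (Set.finite_range e).measurableSet
  have hrange : ∀ᵐ ω ∂μ, X ω ∈ Set.range e := by
    filter_upwards [honehot] with ω hw
    obtain ⟨j, hj⟩ := hw
    exact ⟨j, hj.symm⟩
  have hUnion : (⋃ k, A k) = X ⁻¹' Set.range e := by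
    ext ω; simp [hA, Set.mem_iUnion, eq_comm]
  have hμpre1 : μ (X ⁻¹' Set.range e) = 1 := by
    rw [← prob_compl_eq_zero_iff (hXm hS)]
    rw [ae_iff] at hrange
    simpa [Set.preimage, Set.compl_def] using hrange
  have hμU : μ (⋃ k, A k) = 1 := by rw [hUnion]; exact hμpre1
  have hsumq : ∑ k, q k = 1 := by
    rw [← hμU, measure_iUnion hdisj hAm, tsum_fintype]
  have hsump : ∑ k, p k = 1 := by
    have := congrArg ENNReal.toReal hsumq
    rwa [ENNReal.toReal_sum (fun k _ => hqne k), ENNReal.toReal_one] at this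
  -- a.e. pointwise description of X ω k
  have hindic : ∀ k : Fin K, ∀ᵐ ω ∂μ,
      X ω k = (A k).indicator (fun _ => (1 : ℝ)) ω := by
    intro k
    filter_upwards [honehot] with ω hω
    obtain ⟨j, hj⟩ := hω
    by_cases hjk : j = k
    · rw [hjk] at hj
      have hmem : ω ∈ A k := by simp [hA, hj, he]
      rw [Set.indicator_of_mem hmem, hj]
      simp [he, EuclideanSpace.single_apply]
    · have hmem : ω ∉ A k := by
        simp only [hA, Set.mem_preimage, Set.mem_singleton_iff, hj]
        exact fun h => hjk (hinj h)
      rw [Set.indicator_of_notMem hmem, hj]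
      simp [he, EuclideanSpace.single_apply, show ¬k = j from fun h => hjk h.symm]
  -- mean
  have hmean : ∀ k : Fin K, ∫ ω, X ω k ∂μ = p k := by
    intro k
    rw [integral_congr_ae (hindic k), integral_indicator_const _ (hAm k)]
    simp [hp, hq, measureReal_def]
  -- variance
  have hvar : ∀ k : Fin K, ∫ ω, (X ω k - ∫ ω', X ω' k ∂μ) ^ 2 ∂μ = p k - p k ^ 2 := by
    intro k
    rw [hmean k]
    have hcong : ∀ᵐ ω ∂μ, (X ω k - p k) ^ 2 =
        (A k).indicator (fun _ => ((1 - p k) ^ 2 - p k ^ 2 : ℝ)) ω + p k ^ 2 := by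
      filter_upwards [hindic k] with ω hω
      rw [hω]
      by_cases hmem : ω ∈ A k
      · rw [Set.indicator_of_mem hmem, Set.indicator_of_mem hmem]; ring
      · rw [Set.indicator_of_notMem hmem, Set.indicator_of_notMem hmem]; ring
    rw [integral_congr_ae hcong,
      integral_add ((integrable_const _).indicator (hAm k)) (integrable_const _),
      integral_indicator_const _ (hAm k), integral_const]
    simp only [measureReal_def, measure_univ, ENNReal.toReal_one, smul_eq_mul, one_mul]
    have hqr : (μ (A k)).toReal = p k := rfl
    rw [hqr]; ring
  -- LHS
  have hLHS : ∑ k : Fin K, ∫ ω, (X ω k - ∫ ω', X ω' k ∂μ) ^ 2 ∂μ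
      = 1 - ∑ k, p k ^ 2 := by
    rw [Finset.sum_congr rfl fun k _ => hvar k, Finset.sum_sub_distrib, hsump]
  -- RHS
  have hr1 : ∀ᵐ ω ∂μ, X₁ ω ∈ Set.range e := by
    have h := hid1.measure_mem_eq hS
    rw [ae_iff]
    have : μ ((X₁ ⁻¹' Set.range e)ᶜ) = 0 := by
      rw [measure_compl (hX₁m hS) (measure_ne_top μ _), h, hμpre1, measure_univ,
        tsub_self]
    simpa [Set.preimage, Set.compl_def] using this
  have hr2 : ∀ᵐ ω ∂μ, X₂ ω ∈ Set.range e := by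
    have h := hid2.measure_mem_eq hS
    rw [ae_iff]
    have : μ ((X₂ ⁻¹' Set.range e)ᶜ) = 0 := by
      rw [measure_compl (hX₂m hS) (measure_ne_top μ _), h, hμpre1, measure_univ,
        tsub_self]
    simpa [Set.preimage, Set.compl_def] using this
  set B : Set Ω := {ω | X₁ ω = X₂ ω} with hB
  have hBm : MeasurableSet B := measurableSet_eq_fun hX₁m hX₂m
  set C : Set Ω := ⋃ k, (X₁ ⁻¹' {e k} ∩ X₂ ⁻¹' {e k}) with hC
  have hBC : μ B = μ C := by
    refine measure_congr ?_
    rw [Filter.eventuallyEq_set]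
    filter_upwards [hr1, hr2] with ω h1 h2
    constructor
    · intro hω
      obtain ⟨k, hk⟩ := h1
      refine Set.mem_iUnion.2 ⟨k, ?_, ?_⟩
      · simp only [Set.mem_preimage, Set.mem_singleton_iff]; exact hk.symm
      · simp only [Set.mem_preimage, Set.mem_singleton_iff]
        rw [show X₂ ω = X₁ ω from hω.symm]; exact hk.symm
    · intro hω
      obtain ⟨k, hk1, hk2⟩ := Set.mem_iUnion.1 hω
      simp only [Set.mem_preimage, Set.mem_singleton_iff] at hk1 hk2
      show X₁ ω = X₂ ω
      rw [hk1, hk2]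
  have hCdisj : Pairwise (Function.onFun Disjoint
      (fun k => X₁ ⁻¹' {e k} ∩ X₂ ⁻¹' {e k})) := by
    intro j k hjk
    refine Set.disjoint_left.2 fun ω hj hk => ?_
    have h1 := hj.1; have h2 := hk.1
    simp only [Set.mem_preimage, Set.mem_singleton_iff] at h1 h2
    exact hjk (hinj (h1 ▸ h2 ▸ rfl))
  have hμC : μ C = ∑ k, q k * q k := by
    rw [hC, measure_iUnion hCdisj
      (fun k => (hX₁m (measurableSet_singleton _)).inter (hX₂m (measurableSet_singleton _))),
      tsum_fintype]
    refine Finset.sum_congr rfl fun k _ => ?_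
    rw [hindep.measure_inter_preimage_eq_mul _ _ (measurableSet_singleton _)
      (measurableSet_singleton _),
      hid1.measure_mem_eq (measurableSet_singleton _),
      hid2.measure_mem_eq (measurableSet_singleton _)]
  have hμne : μ {ω | X₁ ω ≠ X₂ ω} = 1 - ∑ k, q k * q k := by
    have : {ω | X₁ ω ≠ X₂ ω} = Bᶜ := rfl
    rw [this, measure_compl hBm (measure_ne_top μ _), measure_univ, hBC, hμC]
  have hle : ∑ k, q k * q k ≤ 1 := by
    rw [← hμC, ← hBC]
    exact prob_le_one
  rw [hμne, hLHS, ENNReal.toReal_sub_of_le hle ENNReal.one_ne_top, ENNReal.toReal_one,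
    ENNReal.toReal_sum (fun k _ => (ENNReal.mul_ne_top (hqne k) (hqne k)))]
  congr 1
  refine Finset.sum_congr rfl fun k _ => ?_
  rw [ENNReal.toReal_mul, ← sq]
end

section
/- Fix a positive integer k ≤ K, and let S be a random nonempty subset of {1, …, K} with |S| = k almost surely, defined on a probability space. Let X = ũ_S be the ℓ₂-normalized indicator vector of S in ℝ^K, and let S₁, S₂ be independent and identically distributed copies of S. Then the total variance satisfies TV(X) = Tr(Σ) = 1 − E[|S₁ ∩ S₂|]/k; equivalently, 1 − TV(X) equals the expected fraction of the k items of one run that recur in an independent run. -/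
open MeasureTheory ProbabilityTheory

/-- Measurable space structure on finite sets of indices (discrete σ-algebra). -/
instance finsetMeasurableSpace {α : Type*} : MeasurableSpace (Finset α) := ⊤

/-- The ℓ₂-normalized indicator vector of a finite set `S ⊆ {1, …, K}`: the vector in `ℝ^K`
whose `k`-th entry is `1/√|S|` if `k ∈ S` and `0` otherwise. -/
noncomputable def normInd {K : ℕ} (S : Finset (Fin K)) : EuclideanSpace ℝ (Fin K) :=
  WithLp.toLp 2 (fun k => if k ∈ S then 1 / Real.sqrt S.card else 0)

/-- Let `S` be a random nonempty subset of `{1, …, K}` with `|S| = k` a.s.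
(`1 ≤ k ≤ K`), let `X = ũ_S` be its ℓ₂-normalized indicator vector, and let `S₁, S₂` be
i.i.d. copies of `S`. Then `TV(X) = Tr(Σ) = 1 − E[|S₁ ∩ S₂|]/k`. -/
theorem stmt_9 {Ω : Type*} [MeasurableSpace Ω] {μ : Measure Ω} [IsProbabilityMeasure μ]
    {K k : ℕ} (hk : 1 ≤ k) (hkK : k ≤ K)
    (S S₁ S₂ : Ω → Finset (Fin K))
    (hSm : Measurable S) (hS₁m : Measurable S₁) (hS₂m : Measurable S₂)
    (hcard : ∀ᵐ ω ∂μ, (S ω).card = k)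
    (hindep : IndepFun S₁ S₂ μ)
    (hid1 : IdentDistrib S₁ S μ μ) (hid2 : IdentDistrib S₂ S μ μ) :
    ∑ j : Fin K, ∫ ω, (normInd (S ω) j - ∫ ω', normInd (S ω') j ∂μ) ^ 2 ∂μ =
      1 - (∫ ω, ((S₁ ω ∩ S₂ ω).card : ℝ) ∂μ) / (k : ℝ) := by
  classical
  have hk0 : (0:ℝ) < k := by exact_mod_cast hk
  set c : ℝ := 1 / Real.sqrt k with hc
  have hc2 : c ^ 2 = 1 / k := by
    rw [hc, div_pow, one_pow, Real.sq_sqrt hk0.le]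
  set ind : Fin K → Finset (Fin K) → ℝ := fun j s => if j ∈ s then 1 else 0 with hind
  have hindsq : ∀ j s, ind j s ^ 2 = ind j s := by
    intro j s; by_cases h : j ∈ s <;> simp [hind, h]
  -- integrability of indicators
  have hint : ∀ (T : Ω → Finset (Fin K)), Measurable T → ∀ j : Fin K,
      Integrable (fun ω => ind j (T ω)) μ := by
    intro T hT j
    refine Integrable.mono' (integrable_const 1)
      ((measurable_from_top (f := ind j)).comp hT).aestronglyMeasurable ?_
    filter_upwards with ω
    by_cases h : j ∈ T ω <;> simp [hind, h]
  set p : Fin K → ℝ := fun j => ∫ ω, ind j (S ω) ∂μ with hp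
  -- a.e. form of normInd
  have hX_ae : ∀ j : Fin K, (fun ω => normInd (S ω) j) =ᵐ[μ] fun ω => c * ind j (S ω) := by
    intro j
    filter_upwards [hcard] with ω hω
    simp only [normInd, hind, hω]
    by_cases h : j ∈ S ω <;> simp [h, hc]
  have hm : ∀ j : Fin K, (∫ ω, normInd (S ω) j ∂μ) = c * p j := by
    intro j
    rw [integral_congr_ae (hX_ae j), integral_const_mul]
  -- per-coordinate variance
  have hvar : ∀ j : Fin K,
      (∫ ω, (normInd (S ω) j - ∫ ω', normInd (S ω') j ∂μ) ^ 2 ∂μ)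
        = c ^ 2 * (p j - p j ^ 2) := by
    intro j
    have heq : (fun ω => (normInd (S ω) j - ∫ ω', normInd (S ω') j ∂μ) ^ 2)
        =ᵐ[μ] fun ω => c ^ 2 * (ind j (S ω) * (1 - 2 * p j)) + c ^ 2 * p j ^ 2 := by
      filter_upwards [hX_ae j] with ω hω
      rw [hω, hm j]
      have := hindsq j (S ω)
      nlinarith [this]
    rw [integral_congr_ae heq, integral_add (((hint S hSm j).mul_const _).const_mul _)
      (integrable_const _), integral_const_mul, integral_mul_const, integral_const]
    simp only [measure_univ, probReal_univ, ENNReal.toReal_one, smul_eq_mul, one_mul, mul_one]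
    have hpj : (∫ a, ind j (S a) ∂μ) = p j := rfl
    rw [hpj]; ring
  -- sum of p equals k
  have hsump : ∑ j : Fin K, p j = (k : ℝ) := by
    rw [hp, ← integral_finset_sum _ (fun j _ => hint S hSm j)]
    have : (fun ω => ∑ j : Fin K, ind j (S ω)) =ᵐ[μ] fun _ => (k : ℝ) := by
      filter_upwards [hcard] with ω hω
      simp [hind, Finset.sum_ite_mem, ← hω]
    rw [integral_congr_ae this, integral_const]; simp
  -- RHS expectation
  have hRHS : (∫ ω, ((S₁ ω ∩ S₂ ω).card : ℝ) ∂μ) = ∑ j : Fin K, p j ^ 2 := by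
    have hcardsum : ∀ ω, ((S₁ ω ∩ S₂ ω).card : ℝ)
        = ∑ j : Fin K, ind j (S₁ ω) * ind j (S₂ ω) := by
      intro ω
      have : ∀ j : Fin K, ind j (S₁ ω) * ind j (S₂ ω) = if j ∈ S₁ ω ∩ S₂ ω then (1:ℝ) else 0 := by
        intro j
        by_cases h1 : j ∈ S₁ ω <;> by_cases h2 : j ∈ S₂ ω <;>
          simp [hind, h1, h2, Finset.mem_inter]
      simp only [this, Finset.sum_ite_mem, Finset.univ_inter]
      simp
    simp only [hcardsum]
    rw [integral_finset_sum]
    · refine Finset.sum_congr rfl fun j _ => ?_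
      have hindep' : IndepFun (fun ω => ind j (S₁ ω)) (fun ω => ind j (S₂ ω)) μ :=
        hindep.comp (measurable_from_top (f := ind j)) (measurable_from_top (f := ind j))
      have := hindep'.integral_mul_eq_mul_integral (hint S₁ hS₁m j).aestronglyMeasurable (hint S₂ hS₂m j).aestronglyMeasurable
      simp only [Pi.mul_apply] at this
      rw [this]
      have h1 : (∫ ω, ind j (S₁ ω) ∂μ) = p j :=
        (hid1.comp (measurable_from_top (f := ind j))).integral_eq
      have h2 : (∫ ω, ind j (S₂ ω) ∂μ) = p j :=
        (hid2.comp (measurable_from_top (f := ind j))).integral_eq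
      rw [h1, h2, sq]
    · intro j _
      refine Integrable.mono' (integrable_const 1) ?_ ?_
      · exact (((measurable_from_top (f := ind j)).comp hS₁m).mul
          ((measurable_from_top (f := ind j)).comp hS₂m)).aestronglyMeasurable
      · filter_upwards with ω
        by_cases h1 : j ∈ S₁ ω <;> by_cases h2 : j ∈ S₂ ω <;> simp [hind, h1, h2]
  simp only [hvar, hRHS]
  have : ∑ j : Fin K, c ^ 2 * (p j - p j ^ 2)
      = c ^ 2 * (∑ j : Fin K, p j) - c ^ 2 * ∑ j : Fin K, p j ^ 2 := by
    rw [Finset.mul_sum, Finset.mul_sum, ← Finset.sum_sub_distrib]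
    exact Finset.sum_congr rfl fun j _ => by ring
  rw [this, hsump, hc2]
  field_simp
end
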